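/- arXiv:2512.11164 — 4 statements merged into one kernel-verified Lean document; each statement's English description precedes it below -/
import Mathlib

section
/- Let G be a connected undirected unweighted graph on N vertices and let u be a vertex. Define fp_Bd(u) = (1/deg(u)) / (∑_{v} 1/deg(v)) and fp_dB(u) = deg(u) / (∑_{v} deg(v)). Then min(fp_Bd(u), fp_dB(u)) ≤ 1/N. -/
/-- On a connected graph, min of the Bd and dB neutral fixation probabilities
of a single mutant at `u` is at most `1/N`. -/
theorem stmt_0 {V : Type*} [Fintype V] [DecidableEq V] (G : SimpleGraph V)
    [DecidableRel G.Adj] (hconn : G.Connected) (u : V)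
    (N : ℕ) (hN : N = Fintype.card V)
    (fpBd fpdB : V → ℝ)
    (hBd : ∀ w : V, fpBd w =
      (1 / (G.degree w : ℝ)) / (∑ v : V, 1 / (G.degree v : ℝ)))
    (hdB : ∀ w : V, fpdB w =
      (G.degree w : ℝ) / (∑ v : V, (G.degree v : ℝ))) :
    min (fpBd u) (fpdB u) ≤ 1 / (N : ℝ) := by
  have hne : Nonempty V := hconn.nonempty
  rcases lt_or_ge 1 (Fintype.card V) with hcard | hcard
  · -- every vertex has positive degree
    have hdeg : ∀ v : V, 0 < G.degree v := by
      intro v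
      rw [G.degree_pos_iff_exists_adj]
      obtain ⟨w, hw⟩ := Fintype.exists_ne_of_one_lt_card hcard v
      obtain ⟨p⟩ := hconn v w
      cases p with
      | nil => exact absurd rfl hw
      | cons h _ => exact ⟨_, h⟩
    have hdR : ∀ v : V, 0 < (G.degree v : ℝ) := fun v => by
      exact_mod_cast hdeg v
    set S1 : ℝ := ∑ v : V, 1 / (G.degree v : ℝ) with hS1
    set S2 : ℝ := ∑ v : V, (G.degree v : ℝ) with hS2
    have hS1pos : 0 < S1 :=
      Finset.sum_pos (fun v _ => by have := hdR v; positivity) Finset.univ_nonempty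
    have hS2pos : 0 < S2 :=
      Finset.sum_pos (fun v _ => hdR v) Finset.univ_nonempty
    -- Cauchy-Schwarz: N^2 ≤ S1 * S2
    have hCS : ((N : ℝ)) ^ 2 ≤ S1 * S2 := by
      have := Finset.sum_sq_le_sum_mul_sum_of_sq_eq_mul (R := ℝ) Finset.univ
        (r := fun _ : V => 1) (f := fun v => 1 / (G.degree v : ℝ))
        (g := fun v => (G.degree v : ℝ))
        (fun v _ => by positivity) (fun v _ => (hdR v).le)
        (fun v _ => by
          show (1:ℝ) ^ 2 = 1 / (G.degree v : ℝ) * (G.degree v : ℝ)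
          rw [one_pow, one_div, inv_mul_cancel₀ (hdR v).ne'])
      simpa [hN, hS1, hS2, one_div, Finset.card_univ] using this
    have hNpos : 0 < (N : ℝ) := by
      rw [hN]; exact_mod_cast Fintype.card_pos
    have hprod : fpBd u * fpdB u = 1 / (S1 * S2) := by
      rw [hBd u, hdB u, div_mul_div_comm, one_div_mul_cancel (hdR u).ne']
    have hprodle : fpBd u * fpdB u ≤ 1 / (N : ℝ) ^ 2 := by
      rw [hprod]
      apply one_div_le_one_div_of_le (by positivity) hCS
    by_contra hcon
    push_neg at hcon
    rw [lt_min_iff] at hcon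
    have h1 : 1 / (N : ℝ) < fpBd u := hcon.1
    have h2 : 1 / (N : ℝ) < fpdB u := hcon.2
    have h0 : (0:ℝ) < 1 / (N : ℝ) := by positivity
    have heq : (1 / (N : ℝ)) * (1 / (N : ℝ)) = 1 / (N : ℝ) ^ 2 := by ring
    nlinarith [mul_lt_mul'' h1 h2 h0.le h0.le]
  · -- card ≤ 1, so only one vertex, degree u = 0
    interval_cases h : Fintype.card V
    · exact absurd hconn.nonempty (by simp [← Fintype.card_pos_iff, h])
    · have hdu : G.degree u = 0 := by
        have := G.degree_lt_card_verts u
        omega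
      have : fpBd u = 0 := by
        rw [hBd u, hdu]; simp
      rw [min_le_iff]
      left
      rw [this]
      positivity
end

section
/- Let G=(V,E) be an undirected unweighted graph on N ≥ 2 vertices, r > 1, and let S ⊆ V with S ≠ ∅, S ≠ V, u ∈ S, v ∉ S, where both deg(u), deg(v) ≥ 1 and deg(u), deg(v) ≤ N. Let w(S) = N + (r−1)|S| and let w_u(S), w_v(S) ∈ [deg(u), r·deg(u)] and [deg(v), r·deg(v)] respectively. Then (1/2)·[ (1/w(S))·(r/deg(u) − 1/deg(v)) + (1/N)·(r/w_v(S) − 1/w_u(S)) ] ≥ (r−1)/(r·N³). -/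
set_option maxHeartbeats 1000000 in
/-- Drift lower bound at `δ = 1/2` for the potential `φ(S) = |S|`. -/
theorem stmt_8 (N : ℕ) (hN : 2 ≤ N) (r : ℝ) (hr : 1 < r)
    (degu degv : ℝ) (hdu1 : 1 ≤ degu) (hduN : degu ≤ (N : ℝ))
    (hdv1 : 1 ≤ degv) (hdvN : degv ≤ (N : ℝ))
    (w : ℝ) (hw1 : (N : ℝ) - 1 + r ≤ w) (hw2 : w ≤ ((N : ℝ) - 1) * r + 1)
    (wu wv : ℝ) (hwu1 : degu ≤ wu) (hwu2 : wu ≤ r * degu)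
    (hwv1 : degv ≤ wv) (hwv2 : wv ≤ r * degv) :
    (1 / 2) * ((1 / w) * (r / degu - 1 / degv)
      + (1 / (N : ℝ)) * (r / wv - 1 / wu))
      ≥ (r - 1) / (r * (N : ℝ) ^ 3) := by
  have hN2 : (2:ℝ) ≤ (N:ℝ) := by exact_mod_cast hN
  have hNpos : (0:ℝ) < (N:ℝ) := by linarith
  have hdu0 : (0:ℝ) < degu := by linarith
  have hdv0 : (0:ℝ) < degv := by linarith
  have hwu0 : (0:ℝ) < wu := by linarith
  have hwv0 : (0:ℝ) < wv := by linarith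
  have hr0 : (0:ℝ) < r := by linarith
  have hwpos : (0:ℝ) < w := by linarith
  have hwN : (N:ℝ) ≤ w := by linarith
  have hwrN : w ≤ r * N := by nlinarith
  have h2 : 1/wu ≤ 1/degu := one_div_le_one_div_of_le hdu0 hwu1
  have h1 : 1/degv ≤ r/wv := by
    rw [div_le_div_iff₀ hdv0 hwv0]; nlinarith
  have key : (1/(N:ℝ)) * (1/degv - 1/degu) ≤ (1/(N:ℝ)) * (r/wv - 1/wu) := by
    apply mul_le_mul_of_nonneg_left _ (by positivity)
    linarith
  rcases le_or_gt (1/degv) (r/degu) with h | h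
  · have s1 : (1/(r*(N:ℝ))) * (r/degu - 1/degv) ≤ (1/w) * (r/degu - 1/degv) := by
      apply mul_le_mul_of_nonneg_right _ (by linarith)
      exact one_div_le_one_div_of_le hwpos hwrN
    have id1 : (1/(r*(N:ℝ))) * (r/degu - 1/degv) + (1/(N:ℝ)) * (1/degv - 1/degu)
        = (r-1)/(r*(N:ℝ)*degv) := by
      field_simp; ring
    have fin : (r-1)/(r*(N:ℝ)^3) ≤ (1/2) * ((r-1)/(r*(N:ℝ)*degv)) := by
      have e : (1/2:ℝ) * ((r-1)/(r*(N:ℝ)*degv)) = (r-1)/(r*(N:ℝ)*degv*2) := by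
        rw [one_div, inv_mul_eq_div, div_div]
      rw [e, div_le_div_iff₀ (by positivity) (by positivity)]
      nlinarith [mul_nonneg (mul_nonneg (mul_nonneg (sub_nonneg.2 hr.le) hr0.le) hNpos.le)
        (by nlinarith : (0:ℝ) ≤ (N:ℝ)^2 - 2*degv)]
    linarith
  · have s1 : (1/(N:ℝ)) * (r/degu - 1/degv) ≤ (1/w) * (r/degu - 1/degv) := by
      apply mul_le_mul_of_nonpos_right (one_div_le_one_div_of_le hNpos hwN)
      linarith
    have id2 : (1/(N:ℝ)) * (r/degu - 1/degv) + (1/(N:ℝ)) * (1/degv - 1/degu)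
        = (r-1)/((N:ℝ)*degu) := by
      field_simp; ring
    have fin : (r-1)/(r*(N:ℝ)^3) ≤ (1/2) * ((r-1)/((N:ℝ)*degu)) := by
      have e : (1/2:ℝ) * ((r-1)/((N:ℝ)*degu)) = (r-1)/((N:ℝ)*degu*2) := by
        rw [one_div, inv_mul_eq_div, div_div]
      rw [e, div_le_div_iff₀ (by positivity) (by positivity)]
      have k1 : 2*((N:ℝ)*degu) ≤ 2*((N:ℝ)*(N:ℝ)) := by nlinarith
      have k2 : 2*((N:ℝ)*(N:ℝ)) ≤ (N:ℝ)^3 := by nlinarith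
      have k3 : (N:ℝ)^3 ≤ r*(N:ℝ)^3 := by nlinarith [pow_pos hNpos 3]
      nlinarith [mul_nonneg (sub_nonneg.2 hr.le)
        (by linarith : (0:ℝ) ≤ r*(N:ℝ)^3 - 2*((N:ℝ)*degu))]
    linarith
end

section
/- Let r ≥ λ² with λ > 1, and let N ≥ 2. Suppose positive reals d_u, d_v satisfy 1 ≤ d_u, d_v ≤ N and d_u/d_v ≤ λ, and let w be a real with N−1+r ≤ w ≤ (N−1)r+1. Then (1/w)·(r/d_u − 1/d_v) ≥ (r−λ)/(r·N²) ≥ (r−1)/(r·N³). -/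
/-- Bd drift lower bound on a `λ`-almost regular graph. -/
theorem stmt_9 (lam r : ℝ) (hlam : 1 < lam) (hr : lam ^ 2 ≤ r)
    (N : ℕ) (hN : 2 ≤ N)
    (du dv : ℝ) (hdu1 : 1 ≤ du) (hduN : du ≤ (N : ℝ))
    (hdv1 : 1 ≤ dv) (hdvN : dv ≤ (N : ℝ)) (hratio : du / dv ≤ lam)
    (w : ℝ) (hw1 : (N : ℝ) - 1 + r ≤ w) (hw2 : w ≤ ((N : ℝ) - 1) * r + 1) :
    (1 / w) * (r / du - 1 / dv) ≥ (r - lam) / (r * (N : ℝ) ^ 2) ∧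
    (r - lam) / (r * (N : ℝ) ^ 2) ≥ (r - 1) / (r * (N : ℝ) ^ 3) := by
  have hN2 : (2 : ℝ) ≤ (N : ℝ) := by exact_mod_cast hN
  have hr1 : 1 < r := lt_of_lt_of_le (by nlinarith) hr
  have hrlam : lam ≤ r := le_trans (by nlinarith) hr
  have hdu0 : 0 < du := lt_of_lt_of_le one_pos hdu1
  have hdv0 : 0 < dv := lt_of_lt_of_le one_pos hdv1
  have hw0 : 0 < w := lt_of_lt_of_le (by nlinarith) hw1
  have hrN0 : 0 < r * (N : ℝ) := by positivity
  have hdulam : du ≤ lam * dv := by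
    have := (div_le_iff₀ hdv0).mp hratio; linarith
  have hwrN : w ≤ r * (N : ℝ) := by nlinarith
  constructor
  · have h2 : (r - lam) / (N : ℝ) ≤ r / du - 1 / dv := by
      rw [div_sub_div _ _ (ne_of_gt hdu0) (ne_of_gt hdv0),
        div_le_div_iff₀ (by linarith) (by positivity)]
      nlinarith [mul_nonneg (mul_nonneg (sub_nonneg.2 hrlam) hdv0.le)
          (sub_nonneg.2 hduN),
        mul_nonneg (sub_nonneg.2 hdulam) (by linarith : (0:ℝ) ≤ (N:ℝ))]
    have h1 : 1 / (r * (N : ℝ)) ≤ 1 / w := one_div_le_one_div_of_le hw0 hwrN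
    calc (r - lam) / (r * (N : ℝ) ^ 2)
        = (1 / (r * (N : ℝ))) * ((r - lam) / (N : ℝ)) := by
          rw [div_mul_div_comm, one_mul]; ring_nf
      _ ≤ (1 / w) * ((r - lam) / (N : ℝ)) :=
          mul_le_mul_of_nonneg_right h1 (div_nonneg (by linarith) (by linarith))
      _ ≤ (1 / w) * (r / du - 1 / dv) :=
          mul_le_mul_of_nonneg_left h2 (by positivity)
  · rw [ge_iff_le, div_le_div_iff₀ (by positivity) (by positivity)]
    have key : r - 1 ≤ (r - lam) * (N : ℝ) := by
      nlinarith [mul_nonneg (sub_nonneg.2 hr) (by linarith : (0:ℝ) ≤ (N:ℝ) - 1),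
        mul_nonneg (by linarith : (0:ℝ) ≤ lam - 1)
          (by nlinarith : (0:ℝ) ≤ ((N:ℝ) - 1) * lam - 1)]
    nlinarith [mul_le_mul_of_nonneg_right key
      (show (0:ℝ) ≤ r * (N:ℝ)^2 by positivity)]
end

section
/- Let r > 1, N ≥ 2, and let d_u, d_v be integers with 1 ≤ d_u, d_v ≤ N−1. Let w_u ∈ [d_u, d_u + r − 1] and w_v ∈ [r·d_v − r + 1, r·d_v] be reals representing neighborhood fitness sums. If either w_u ≥ d_u + r − 1 or w_v ≤ r·d_v − r + 1 (i.e., u has a mutant neighbor or v has a wild-type neighbor), then (1/N)·(r·d_v/w_v − d_u/w_u) ≥ (r−1)/(r·N²). -/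
/-- dB-step drift bound with the degree-weighted potential. -/
theorem stmt_10 (r : ℝ) (hr : 1 < r) (N : ℕ) (hN : 2 ≤ N)
    (du dv : ℤ) (hdu1 : 1 ≤ du) (hduN : du ≤ (N : ℤ) - 1)
    (hdv1 : 1 ≤ dv) (hdvN : dv ≤ (N : ℤ) - 1)
    (wu wv : ℝ) (hwu1 : (du : ℝ) ≤ wu) (hwu2 : wu ≤ (du : ℝ) + r - 1)
    (hwv1 : r * (dv : ℝ) - r + 1 ≤ wv) (hwv2 : wv ≤ r * (dv : ℝ))
    (hcase : (du : ℝ) + r - 1 ≤ wu ∨ wv ≤ r * (dv : ℝ) - r + 1) :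
    (1 / (N : ℝ)) * (r * (dv : ℝ) / wv - (du : ℝ) / wu)
      ≥ (r - 1) / (r * (N : ℝ) ^ 2) := by
  have hN2 : (2:ℝ) ≤ (N:ℝ) := by exact_mod_cast hN
  have hdu1' : (1:ℝ) ≤ (du:ℝ) := by exact_mod_cast hdu1
  have hdv1' : (1:ℝ) ≤ (dv:ℝ) := by exact_mod_cast hdv1
  have hduN' : (du:ℝ) ≤ (N:ℝ) - 1 := by
    have : ((du:ℝ)) ≤ ((N:ℤ) - 1 : ℤ) := by exact_mod_cast hduN
    push_cast at this; linarith
  have hdvN' : (dv:ℝ) ≤ (N:ℝ) - 1 := by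
    have : ((dv:ℝ)) ≤ ((N:ℤ) - 1 : ℤ) := by exact_mod_cast hdvN
    push_cast at this; linarith
  have hr0 : 0 < r := by linarith
  have hwu0 : 0 < wu := by linarith
  have hwv0 : 0 < wv := by nlinarith
  have hN0 : (0:ℝ) < N := by linarith
  have key : r * (dv:ℝ) / wv - (du:ℝ) / wu ≥ (r - 1) / (r * (N:ℝ)) := by
    have hrN0 : 0 < r * (N:ℝ) := by positivity
    rcases hcase with h | h
    · have hwu : wu = (du:ℝ) + r - 1 := le_antisymm hwu2 h
      have h1 : (1:ℝ) ≤ r * (dv:ℝ) / wv := by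
        rw [le_div_iff₀ hwv0]; linarith
      have hden : 0 < (du:ℝ) + r - 1 := by linarith
      have h2 : (du:ℝ) / wu = (du:ℝ) / ((du:ℝ) + r - 1) := by rw [hwu]
      have h4 : (r - 1) / (r * (N:ℝ)) ≤ (r - 1) / ((du:ℝ) + r - 1) := by
        apply div_le_div_of_nonneg_left (by linarith) hden
        nlinarith
      have h5 : (r - 1) / ((du:ℝ) + r - 1) = 1 - (du:ℝ) / ((du:ℝ) + r - 1) := by
        field_simp
        ring
      rw [h2]; linarith
    · have hwv : wv = r * (dv:ℝ) - r + 1 := le_antisymm h hwv1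
      have h1 : (du:ℝ) / wu ≤ 1 := by
        rw [div_le_one hwu0]; linarith
      have hden : 0 < r * (dv:ℝ) - r + 1 := by nlinarith
      have h4 : (r - 1) / (r * (N:ℝ)) ≤ (r - 1) / (r * (dv:ℝ) - r + 1) := by
        apply div_le_div_of_nonneg_left (by linarith) hden
        nlinarith
      have h5 : (r - 1) / (r * (dv:ℝ) - r + 1) = r * (dv:ℝ) / (r * (dv:ℝ) - r + 1) - 1 := by
        rw [div_sub_one hden.ne']; congr 1; ring
      rw [hwv]; linarith
  have heq : (r - 1) / (r * (N:ℝ) ^ 2) = (1 / (N:ℝ)) * ((r - 1) / (r * (N:ℝ))) := by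
    rw [pow_two]
    rw [div_mul_eq_div_div_swap, div_div]
    ring_nf
  rw [ge_iff_le, heq]
  apply mul_le_mul_of_nonneg_left key (by positivity)
end
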